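/- arXiv:1805.04063 — 4 statements merged into one kernel-verified Lean document; each statement's English description precedes it below -/
import Mathlib

section
/- Let Λ be a unimodular lattice, let T ⊆ Λ be a primitive sublattice on which the restricted bilinear form is nondegenerate, and let M = T^⊥. Then the discriminant groups A_T and A_M are isomorphic as abelian groups. -/
open Matrix

namespace MaxAlg

/-- Orthogonal direct sum of two Gram matrices. -/
def dsum {ι κ : Type*} (M : Matrix ι ι ℤ) (N : Matrix κ κ ℤ) : Matrix (ι ⊕ κ) (ι ⊕ κ) ℤ :=
  Matrix.fromBlocks M 0 0 N

/-- The hyperbolic plane U. -/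
def U : Matrix (Fin 2) (Fin 2) ℤ := !![0, 1; 1, 0]

/-- The root lattice A₂ (Cartan matrix). -/
def A2 : Matrix (Fin 2) (Fin 2) ℤ := !![2, -1; -1, 2]

/-- The root lattice D₄ (Cartan matrix). -/
def D4 : Matrix (Fin 4) (Fin 4) ℤ := !![2, -1, 0, 0; -1, 2, -1, -1; 0, -1, 2, 0; 0, -1, 0, 2]

/-- The root lattice E₆ (Cartan matrix). -/
def E6 : Matrix (Fin 6) (Fin 6) ℤ := CartanMatrix.E₆

/-- The root lattice E₈ (Cartan matrix). -/
def E8 : Matrix (Fin 8) (Fin 8) ℤ := CartanMatrix.E₈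

abbrev K3Ix : Type := (Fin 8 ⊕ Fin 8) ⊕ (Fin 2 ⊕ (Fin 2 ⊕ Fin 2))

/-- The K3 lattice (E₈)² ⊕ U³. -/
def K3 : Matrix K3Ix K3Ix ℤ := dsum (dsum E8 E8) (dsum U (dsum U U))

abbrev Λ0Ix : Type := Fin 2 ⊕ ((Fin 8 ⊕ Fin 8) ⊕ (Fin 2 ⊕ Fin 2))

/-- Λ₀ = A₂ ⊕ (E₈)² ⊕ U². -/
def Λ0 : Matrix Λ0Ix Λ0Ix ℤ := dsum A2 (dsum (dsum E8 E8) (dsum U U))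

abbrev T0Ix : Type := (Fin 4 ⊕ (Fin 4 ⊕ Fin 4)) ⊕ (Fin 2 ⊕ Fin 2)

/-- The lattice (D₄)³ ⊕ U². -/
def T0 : Matrix T0Ix T0Ix ℤ := dsum (dsum D4 (dsum D4 D4)) (dsum U U)

/-- The odd unimodular lattice I_{21,2} = diag(1,…,1,−1,−1). -/
def I212 : Matrix (Fin 23) (Fin 23) ℤ := Matrix.diagonal fun i => if (i : ℕ) < 21 then 1 else -1

variable {ι κ : Type*} [Fintype ι] [Fintype κ]

/-- The map `v ↦ ⟨v,-⟩` from a Gram lattice to its dual `Hom(L,ℤ)`. -/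
def toDual (M : Matrix ι ι ℤ) : (ι → ℤ) →ₗ[ℤ] Module.Dual ℤ (ι → ℤ) where
  toFun v :=
    { toFun := fun w => v ⬝ᵥ M.mulVec w
      map_add' := fun a b => by simp [Matrix.mulVec_add, dotProduct_add]
      map_smul' := fun c a => by
        show v ⬝ᵥ M.mulVec (c • a) = c • (v ⬝ᵥ M.mulVec a)
        rw [Matrix.mulVec_smul, dotProduct_smul] }
  map_add' a b := by ext w; simp [add_dotProduct]
  map_smul' c a := by
    ext w
    simp only [LinearMap.coe_mk, AddHom.coe_mk, LinearMap.smul_apply, RingHom.id_apply,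
      smul_dotProduct, smul_eq_mul]

/-- The discriminant group A_L := Hom(L,ℤ)/im(L → Hom(L,ℤ)). -/
abbrev DiscGroup (M : Matrix ι ι ℤ) : Type _ :=
  Module.Dual ℤ (ι → ℤ) ⧸ LinearMap.range (toDual M)

/-- Minimal number of generators of an abelian group. -/
noncomputable def minGens (A : Type*) [AddCommGroup A] : ℕ :=
  sInf {k | ∃ S : Finset A, S.card = k ∧ AddSubgroup.closure (S : Set A) = ⊤}

/-- Orthogonal complement of a set of vectors in a Gram lattice. -/
def orthComp (M : Matrix ι ι ℤ) (s : Set (ι → ℤ)) : Submodule ℤ (ι → ℤ) where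
  carrier := {v | ∀ t ∈ s, v ⬝ᵥ M.mulVec t = 0}
  add_mem' := fun ha hb t ht => by simp [add_dotProduct, ha t ht, hb t ht]
  zero_mem' := fun t ht => by simp
  smul_mem' := fun c a ha t ht => by rw [smul_dotProduct, ha t ht, smul_zero]

/-- A submodule is primitive if the quotient by it is torsion-free. -/
def IsPrimitiveSubmodule (p : Submodule ℤ (ι → ℤ)) : Prop :=
  ∀ (v : ι → ℤ) (k : ℤ), k ≠ 0 → k • v ∈ p → v ∈ p

/-- The restriction of the form of `M` to a submodule, as a map into the dual. -/
def subToDual (M : Matrix ι ι ℤ) (p : Submodule ℤ (ι → ℤ)) : ↥p →ₗ[ℤ] Module.Dual ℤ ↥p :=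
  (p.subtype.dualMap) ∘ₗ ((toDual M) ∘ₗ p.subtype)

/-- Discriminant group of a (sub)lattice `p ⊆ L` with the restricted form. -/
abbrev DiscGroupSub (M : Matrix ι ι ℤ) (p : Submodule ℤ (ι → ℤ)) : Type _ :=
  Module.Dual ℤ ↥p ⧸ LinearMap.range (subToDual M p)

/-- A primitive isometric embedding of the lattice with Gram matrix `M` into the one
with Gram matrix `N`. -/
def IsPrimitiveEmbedding (M : Matrix ι ι ℤ) (N : Matrix κ κ ℤ)
    (f : (ι → ℤ) →ₗ[ℤ] (κ → ℤ)) : Prop :=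
  Function.Injective f ∧
  (∀ v w, f v ⬝ᵥ N.mulVec (f w) = v ⬝ᵥ M.mulVec w) ∧
  ∀ (v : κ → ℤ) (k : ℤ), k ≠ 0 → k • v ∈ LinearMap.range f → v ∈ LinearMap.range f

/-- Two Gram lattices are isometric. -/
def LatticeIsometric (M : Matrix ι ι ℤ) (N : Matrix κ κ ℤ) : Prop :=
  ∃ e : (ι → ℤ) ≃ₗ[ℤ] (κ → ℤ), ∀ v w, e v ⬝ᵥ N.mulVec (e w) = v ⬝ᵥ M.mulVec w

/-- An even lattice. -/
def IsEvenMatrix (M : Matrix ι ι ℤ) : Prop := ∀ v : ι → ℤ, 2 ∣ v ⬝ᵥ M.mulVec v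

/-- The lattice has signature (p,q): over ℝ the form is equivalent to the diagonal
form with `p` entries `+1` and `q` entries `−1`. -/
def HasSignature {n : ℕ} (M : Matrix (Fin n) (Fin n) ℤ) (p q : ℕ) : Prop :=
  p + q = n ∧ ∃ P : Matrix (Fin n) (Fin n) ℝ, IsUnit P.det ∧
    Pᵀ * (M.map (Int.cast : ℤ → ℝ)) * P =
      Matrix.diagonal (fun i : Fin n => if (i : ℕ) < p then (1 : ℝ) else -1)

end MaxAlg

namespace MaxAlg

variable {L : Type*} [AddCommGroup L]

/-- Orthogonal complement of a submodule with respect to a bilinear form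
`B : L →ₗ[ℤ] Hom(L,ℤ)`. -/
def orthB (B : L →ₗ[ℤ] Module.Dual ℤ L) (T : Submodule ℤ L) : Submodule ℤ L where
  carrier := {v | ∀ t ∈ T, B v t = 0}
  add_mem' := fun ha hb t ht => by simp [ha t ht, hb t ht]
  zero_mem' := fun t ht => by simp
  smul_mem' := fun c a ha t ht => by simp [ha t ht]

/-- The restriction of the form `B` to a submodule `p`, as a map `p → Hom(p,ℤ)`. -/
def restrictB (B : L →ₗ[ℤ] Module.Dual ℤ L) (p : Submodule ℤ L) :
    ↥p →ₗ[ℤ] Module.Dual ℤ ↥p :=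
  (p.subtype.dualMap) ∘ₗ (B ∘ₗ p.subtype)

/-- The discriminant group A_p = Hom(p,ℤ)/im(p → Hom(p,ℤ)) of a sublattice `p`
with the restricted form. -/
abbrev DiscB (B : L →ₗ[ℤ] Module.Dual ℤ L) (p : Submodule ℤ L) : Type _ :=
  Module.Dual ℤ ↥p ⧸ LinearMap.range (restrictB B p)

end MaxAlg


namespace MaxAlg

section Aux

variable {Λ : Type*} [AddCommGroup Λ] [Module.Free ℤ Λ] [Module.Finite ℤ Λ]
variable (B : Λ →ₗ[ℤ] Module.Dual ℤ Λ)

/-- Restriction of functionals `B v` to a submodule. -/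
def resDual (p : Submodule ℤ Λ) : Λ →ₗ[ℤ] Module.Dual ℤ ↥p :=
  (p.subtype.dualMap) ∘ₗ B

@[simp] lemma resDual_apply (p : Submodule ℤ Λ) (v : Λ) (x : ↥p) :
    resDual B p v x = B v x := rfl

@[simp] lemma restrictB_apply' (p : Submodule ℤ Λ) (t x : ↥p) :
    restrictB B p t x = B ↑t ↑x := rfl

lemma mem_orthB {p : Submodule ℤ Λ} {v : Λ} :
    v ∈ orthB B p ↔ ∀ t ∈ p, B v t = 0 := Iff.rfl

lemma resDual_surjective (p : Submodule ℤ Λ)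
    (hB : Function.Surjective B)
    (hp : ∀ (v : Λ) (k : ℤ), k ≠ 0 → k • v ∈ p → v ∈ p) :
    Function.Surjective (resDual B p) := by
  have hnz : NoZeroSMulDivisors ℤ (Λ ⧸ p) := by
    constructor
    intro k x hkx
    by_contra h
    push_neg at h
    obtain ⟨hk, hx⟩ := h
    obtain ⟨v, rfl⟩ := Submodule.mkQ_surjective p x
    apply hx
    rw [Submodule.mkQ_apply, Submodule.Quotient.mk_eq_zero]
    apply hp v k hk
    rw [← Submodule.Quotient.mk_eq_zero p, ← Submodule.mkQ_apply, _root_.map_smul]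
    exact hkx
  have hfree : Module.Free ℤ (Λ ⧸ p) := Module.free_of_finite_type_torsion_free'
  obtain ⟨s, hs⟩ := Module.projective_lifting_property p.mkQ
    (LinearMap.id : (Λ ⧸ p) →ₗ[ℤ] (Λ ⧸ p)) (Submodule.mkQ_surjective p)
  -- retraction onto p
  have hmem : ∀ v : Λ, v - s (p.mkQ v) ∈ p := by
    intro v
    rw [← Submodule.Quotient.mk_eq_zero]
    have : p.mkQ (v - s (p.mkQ v)) = 0 := by
      rw [_root_.map_sub]
      have := LinearMap.congr_fun hs (p.mkQ v)
      simp only [LinearMap.coe_comp, Function.comp_apply, LinearMap.id_apply] at this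
      rw [this, sub_self]
    simpa using this
  let r : Λ →ₗ[ℤ] ↥p := (LinearMap.id - s ∘ₗ p.mkQ).codRestrict p hmem
  have hr : ∀ x : ↥p, r ↑x = x := by
    intro x
    apply Subtype.ext
    show (x : Λ) - s (p.mkQ ↑x) = ↑x
    rw [Submodule.mkQ_apply, (Submodule.Quotient.mk_eq_zero p).mpr x.2, _root_.map_zero, sub_zero]
  intro f
  obtain ⟨v, hv⟩ := hB ((f ∘ₗ r : Λ →ₗ[ℤ] ℤ))
  refine ⟨v, ?_⟩
  ext x
  simp [resDual_apply, hv, hr x]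

lemma ker_resQ (p : Submodule ℤ Λ) :
    LinearMap.ker ((LinearMap.range (restrictB B p)).mkQ ∘ₗ resDual B p)
      = p ⊔ orthB B p := by
  ext v
  simp only [LinearMap.mem_ker, LinearMap.coe_comp, Function.comp_apply,
    Submodule.mkQ_apply, Submodule.Quotient.mk_eq_zero, LinearMap.mem_range]
  constructor
  · rintro ⟨t, ht⟩
    have hdiff : v - ↑t ∈ orthB B p := by
      intro w hw
      have := LinearMap.congr_fun ht ⟨w, hw⟩
      simp only [restrictB_apply', resDual_apply] at this
      simp [_root_.map_sub, this]
    exact Submodule.mem_sup.mpr ⟨↑t, t.2, v - ↑t, hdiff, by abel⟩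
  · intro hv
    obtain ⟨t, ht, m, hm, rfl⟩ := Submodule.mem_sup.mp hv
    refine ⟨⟨t, ht⟩, ?_⟩
    ext x
    have := hm ↑x x.2
    simp [this]

/-- `A_p ≃ Λ ⧸ (p ⊔ p^⊥)` for a primitive sublattice of a unimodular lattice. -/
noncomputable def discEquivQuot (p : Submodule ℤ Λ)
    (hB : Function.Surjective B)
    (hp : ∀ (v : Λ) (k : ℤ), k ≠ 0 → k • v ∈ p → v ∈ p) :
    (Λ ⧸ (p ⊔ orthB B p)) ≃ₗ[ℤ] DiscB B p :=
  (Submodule.quotEquivOfEq _ _ (ker_resQ B p).symm).trans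
    (LinearMap.quotKerEquivOfSurjective _
      (((LinearMap.range (restrictB B p)).mkQ_surjective).comp
        (resDual_surjective B p hB hp)))


lemma exists_smul_mem_range_restrictB (p : Submodule ℤ Λ)
    (hinj : Function.Injective (restrictB B p)) (f : Module.Dual ℤ ↥p) :
    ∃ n : ℤ, n ≠ 0 ∧ n • f ∈ LinearMap.range (restrictB B p) := by
  classical
  let b := Module.Free.chooseBasis ℤ ↥p
  let A := LinearMap.toMatrix b b.dualBasis (restrictB B p)
  have hφ : Matrix.toLin b b.dualBasis A = restrictB B p :=
    Matrix.toLin_toMatrix b b.dualBasis _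
  have hdet : A.det ≠ 0 := by
    intro h
    obtain ⟨v, hv, hAv⟩ := Matrix.exists_mulVec_eq_zero_iff.mpr h
    apply hv
    have hrepr : ⇑(b.repr (b.equivFun.symm v)) = v := by
      funext i
      rw [← Module.Basis.equivFun_apply, LinearEquiv.apply_symm_apply]
    have h0 : restrictB B p (b.equivFun.symm v) = 0 := by
      rw [← hφ, Matrix.toLin_apply, hrepr, hAv]
      simp
    have := hinj (a₁ := b.equivFun.symm v) (a₂ := 0) (by rw [h0, _root_.map_zero])
    have : b.equivFun.symm v = b.equivFun.symm 0 := by simpa using this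
    simpa using b.equivFun.symm.injective this
  refine ⟨A.det, hdet, Matrix.toLin b.dualBasis b A.adjugate f, ?_⟩
  have hcomp : (Matrix.toLin b b.dualBasis A) ∘ₗ (Matrix.toLin b.dualBasis b A.adjugate)
      = Matrix.toLin b.dualBasis b.dualBasis (A * A.adjugate) :=
    (Matrix.toLin_mul b.dualBasis b b.dualBasis A A.adjugate).symm
  have := LinearMap.congr_fun hcomp f
  simp only [LinearMap.coe_comp, Function.comp_apply] at this
  rw [hφ] at this
  rw [this, Matrix.mul_adjugate, LinearEquiv.map_smul, LinearMap.smul_apply,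
    Matrix.toLin_one, LinearMap.id_apply]


lemma restrictB_injective (T : Submodule ℤ Λ)
    (hnondeg : ∀ v ∈ T, (∀ w ∈ T, B v w = 0) → v = 0) :
    Function.Injective (restrictB B T) := by
  rw [← LinearMap.ker_eq_bot]
  ext t
  simp only [LinearMap.mem_ker, Submodule.mem_bot]
  constructor
  · intro h
    refine Subtype.ext (hnondeg ↑t t.2 (fun w hw => ?_))
    have := LinearMap.congr_fun h ⟨w, hw⟩
    simpa using this
  · rintro rfl; simp

lemma exists_smul_mem_sup (T : Submodule ℤ Λ)
    (hnondeg : ∀ v ∈ T, (∀ w ∈ T, B v w = 0) → v = 0) (v : Λ) :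
    ∃ n : ℤ, n ≠ 0 ∧ n • v ∈ T ⊔ orthB B T := by
  obtain ⟨n, hn, t, ht⟩ := exists_smul_mem_range_restrictB B T
    (restrictB_injective B T hnondeg) (resDual B T v)
  refine ⟨n, hn, ?_⟩
  have hdiff : n • v - ↑t ∈ orthB B T := by
    intro w hw
    have h1 := LinearMap.congr_fun ht ⟨w, hw⟩
    simp only [restrictB_apply', LinearMap.smul_apply, resDual_apply,
      smul_eq_mul] at h1
    rw [_root_.map_sub, _root_.map_smul, LinearMap.sub_apply, LinearMap.smul_apply, h1]
    simp
  exact Submodule.mem_sup.mpr ⟨↑t, t.2, n • v - ↑t, hdiff, by abel⟩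

lemma orthB_nondeg (T : Submodule ℤ Λ) (hBi : Function.Injective B)
    (hnondeg : ∀ v ∈ T, (∀ w ∈ T, B v w = 0) → v = 0) :
    ∀ m ∈ orthB B T, (∀ w ∈ orthB B T, B m w = 0) → m = 0 := by
  intro m hm h
  apply hBi
  rw [_root_.map_zero]
  ext w
  obtain ⟨n, hn, hw⟩ := exists_smul_mem_sup B T hnondeg w
  obtain ⟨t, ht, m', hm', heq⟩ := Submodule.mem_sup.mp hw
  have h0 : B m (n • w) = 0 := by
    rw [← heq, _root_.map_add, hm t ht, h m' hm', add_zero]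
  have : n • (B m w) = 0 := by rw [← _root_.map_smul]; exact h0
  rcases smul_eq_zero.mp this with hc | hc
  · exact absurd hc hn
  · simpa using hc

lemma orthB_orthB (T : Submodule ℤ Λ) (hBi : Function.Injective B)
    (hsymm : ∀ v w : Λ, B v w = B w v)
    (hprim : ∀ (v : Λ) (k : ℤ), k ≠ 0 → k • v ∈ T → v ∈ T)
    (hnondeg : ∀ v ∈ T, (∀ w ∈ T, B v w = 0) → v = 0) :
    orthB B (orthB B T) = T := by
  apply le_antisymm
  · intro v hv
    obtain ⟨n, hn, hnv⟩ := exists_smul_mem_sup B T hnondeg v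
    obtain ⟨t, ht, m, hm, heq⟩ := Submodule.mem_sup.mp hnv
    have hm0 : m = 0 := by
      apply orthB_nondeg B T hBi hnondeg m hm
      intro w hw
      have h1 : B (n • v) w = 0 := by
        rw [_root_.map_smul, LinearMap.smul_apply, hv w hw, smul_zero]
      have h2 : B t w = 0 := by rw [hsymm]; exact hw t ht
      have : B t w + B m w = 0 := by
        rw [← LinearMap.add_apply, ← _root_.map_add, heq]; exact h1
      rwa [h2, zero_add] at this
    apply hprim v n hn
    rw [← heq, hm0, add_zero]
    exact ht
  · intro t ht m hm
    rw [hsymm]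
    exact hm t ht


end Aux

/-- If `Λ` is a unimodular lattice, `T ⊆ Λ` a primitive sublattice on which the
restricted form is nondegenerate, and `M = T^⊥`, then `A_T ≅ A_M` as abelian groups. -/
theorem discGroup_iso_orthComp_of_unimodular (Λ : Type*) [AddCommGroup Λ]
    [Module.Free ℤ Λ] [Module.Finite ℤ Λ]
    (B : Λ →ₗ[ℤ] Module.Dual ℤ Λ)
    (hsymm : ∀ v w : Λ, B v w = B w v)
    (hunimodular : Function.Bijective B)
    (T : Submodule ℤ Λ)
    (hprim : ∀ (v : Λ) (k : ℤ), k ≠ 0 → k • v ∈ T → v ∈ T)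
    (hnondeg : ∀ v ∈ T, (∀ w ∈ T, B v w = 0) → v = 0) :
    Nonempty (DiscB B T ≃+ DiscB B (orthB B T)) := by
  have hMprim : ∀ (v : Λ) (k : ℤ), k ≠ 0 → k • v ∈ orthB B T → v ∈ orthB B T := by
    intro v k hk hkv t ht
    have h0 : k • (B v t) = 0 := by
      rw [← LinearMap.smul_apply, ← _root_.map_smul]; exact hkv t ht
    rcases smul_eq_zero.mp h0 with hc | hc
    · exact absurd hc hk
    · exact hc
  have e1 := discEquivQuot B T hunimodular.2 hprim
  have e2 := discEquivQuot B (orthB B T) hunimodular.2 hMprim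
  have hq : (T ⊔ orthB B T) = (orthB B T ⊔ orthB B (orthB B T)) := by
    rw [orthB_orthB B T hunimodular.1 hsymm hprim hnondeg, sup_comm]
  exact ⟨((e1.symm.trans (Submodule.quotEquivOfEq _ _ hq)).trans e2).toAddEquiv⟩

end MaxAlg
end

section
/- Let T be a primitive sublattice of the K3 lattice (E8)² ⊕ U³ on which the bilinear form is nondegenerate. Then l(A_T) ≤ min(rank T, 22 − rank T). -/
open Matrix

namespace MaxAlg

section Aux

/-- Integer inverse of the E₈ Cartan matrix. -/
def E8inv : Matrix (Fin 8) (Fin 8) ℤ :=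
  !![4, 5, 7, 10, 8, 6, 4, 2;
     5, 8, 10, 15, 12, 9, 6, 3;
     7, 10, 14, 20, 16, 12, 8, 4;
     10, 15, 20, 30, 24, 18, 12, 6;
     8, 12, 16, 24, 20, 15, 10, 5;
     6, 9, 12, 18, 15, 12, 8, 4;
     4, 6, 8, 12, 10, 8, 6, 3;
     2, 3, 4, 6, 5, 4, 3, 2]

lemma E8inv_mul : E8inv * E8 = 1 := by decide

lemma U_mul_U : U * U = 1 := by decide

lemma dsum_mul {ι κ : Type*} [Fintype ι] [Fintype κ] [DecidableEq ι] [DecidableEq κ]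
    {M M' : Matrix ι ι ℤ} {N N' : Matrix κ κ ℤ} (h1 : M * M' = 1) (h2 : N * N' = 1) :
    dsum M N * dsum M' N' = 1 := by
  simp [dsum, Matrix.fromBlocks_multiply, h1, h2, ← Matrix.fromBlocks_one]

def K3inv : Matrix K3Ix K3Ix ℤ := dsum (dsum E8inv E8inv) (dsum U (dsum U U))

lemma K3inv_mul : K3inv * K3 = 1 :=
  dsum_mul (dsum_mul E8inv_mul E8inv_mul) (dsum_mul U_mul_U (dsum_mul U_mul_U U_mul_U))

lemma toDual_K3_surjective : Function.Surjective (toDual K3) := by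
  intro f
  refine ⟨Matrix.vecMul (fun i => f (Pi.single i 1)) K3inv, ?_⟩
  refine LinearMap.ext fun w => ?_
  show Matrix.vecMul (fun i => f (Pi.single i 1)) K3inv ⬝ᵥ K3.mulVec w = f w
  rw [Matrix.dotProduct_mulVec, Matrix.vecMul_vecMul, K3inv_mul, Matrix.vecMul_one]
  conv_rhs => rw [← Finset.univ_sum_single w, map_sum]
  simp only [dotProduct]
  refine Finset.sum_congr rfl fun i _ => ?_
  have h : Pi.single i (w i) = w i • (Pi.single i (1 : ℤ) : K3Ix → ℤ) := by
    ext j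
    simp [Pi.single_apply, mul_ite]
  rw [h, _root_.map_smul, smul_eq_mul, mul_comm]

/-- A primitive submodule of `ℤ^n` admits a linear retraction. -/
lemma exists_retraction (T : Submodule ℤ (K3Ix → ℤ)) (hprim : IsPrimitiveSubmodule T) :
    ∃ π : (K3Ix → ℤ) →ₗ[ℤ] ↥T, ∀ t : ↥T, π (t : K3Ix → ℤ) = t := by
  haveI : NoZeroSMulDivisors ℤ ((K3Ix → ℤ) ⧸ T) := by
    refine ⟨fun {k x} h => ?_⟩
    by_cases hk : k = 0
    · exact Or.inl hk
    · refine Or.inr ?_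
      obtain ⟨v, rfl⟩ := T.mkQ_surjective x
      rw [← _root_.map_smul, Submodule.mkQ_apply, Submodule.Quotient.mk_eq_zero] at h
      rw [Submodule.mkQ_apply, Submodule.Quotient.mk_eq_zero]
      exact hprim v k hk h
  obtain ⟨s, hs⟩ := Module.projective_lifting_property T.mkQ LinearMap.id T.mkQ_surjective
  set ρ : (K3Ix → ℤ) →ₗ[ℤ] (K3Ix → ℤ) := LinearMap.id - s ∘ₗ T.mkQ with hρ
  have hsec : ∀ y, T.mkQ (s y) = y := fun y => LinearMap.congr_fun hs y
  have hmem : ∀ x : K3Ix → ℤ, ρ x ∈ T := by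
    intro x
    have : T.mkQ (ρ x) = 0 := by
      simp [hρ, map_sub, hsec]
    rwa [Submodule.mkQ_apply, Submodule.Quotient.mk_eq_zero] at this
  refine ⟨ρ.codRestrict T hmem, fun t => ?_⟩
  apply Subtype.ext
  have h0 : T.mkQ (t : K3Ix → ℤ) = 0 := (Submodule.Quotient.mk_eq_zero T).2 t.2
  show (t : K3Ix → ℤ) - s (T.mkQ (t : K3Ix → ℤ)) = (t : K3Ix → ℤ)
  rw [h0, map_zero, sub_zero]

lemma closure_eq_top_of_span_eq_top {A : Type*} [AddCommGroup A] [Module ℤ A] {s : Set A}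
    (h : Submodule.span ℤ s = ⊤) : AddSubgroup.closure s = ⊤ := by
  rw [AddSubgroup.eq_top_iff']
  intro x
  have hx : x ∈ Submodule.span ℤ s := h ▸ Submodule.mem_top
  refine Submodule.span_induction (fun y hy => AddSubgroup.subset_closure hy)
    (AddSubgroup.zero_mem _) (fun a b _ _ ha hb => AddSubgroup.add_mem _ ha hb)
    (fun k a _ ha => ?_) hx
  have h2 := AddSubgroup.zsmul_mem _ ha k
  rwa [← int_smul_eq_zsmul ‹Module ℤ A› k a] at h2

/-- Image of a spanning finset under a surjection bounds `minGens`. -/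
lemma minGens_le_of_span {M A : Type*} [AddCommGroup M] [Module ℤ M] [AddCommGroup A] [Module ℤ A]
    (f : M →ₗ[ℤ] A) (hf : Function.Surjective f) (S : Finset M)
    (hS : Submodule.span ℤ (S : Set M) = ⊤) : minGens A ≤ S.card := by
  classical
  have hspan : Submodule.span ℤ ((S.image f : Finset A) : Set A) = ⊤ := by
    rw [Finset.coe_image, Submodule.span_image, hS, Submodule.map_top,
      LinearMap.range_eq_top.2 hf]
  have hcl : AddSubgroup.closure ((S.image f : Finset A) : Set A) = ⊤ :=
    closure_eq_top_of_span_eq_top hspan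
  exact le_trans (Nat.sInf_le ⟨S.image f, rfl, hcl⟩) Finset.card_image_le

lemma minGens_le_finrank {M A : Type*} [AddCommGroup M] [Module ℤ M] [Module.Free ℤ M]
    [Module.Finite ℤ M] [AddCommGroup A] [Module ℤ A] (f : M →ₗ[ℤ] A)
    (hf : Function.Surjective f) : minGens A ≤ Module.finrank ℤ M := by
  classical
  let b := Module.Free.chooseBasis ℤ M
  have hcard : (Finset.univ.image b).card = Module.finrank ℤ M := by
    rw [Finset.card_image_of_injective _ b.injective, Finset.card_univ,
      Module.finrank_eq_card_chooseBasisIndex]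
  have hspan : Submodule.span ℤ ((Finset.univ.image b : Finset M) : Set M) = ⊤ := by
    rw [Finset.coe_image, Finset.coe_univ, Set.image_univ, b.span_eq]
  exact hcard ▸ minGens_le_of_span f hf _ hspan

end Aux

end MaxAlg


namespace MaxAlg

/-- For a primitive sublattice `T` of the K3 lattice `(E8)² ⊕ U³` on which the
form is nondegenerate, `l(A_T) ≤ min(rank T, 22 − rank T)`. -/
theorem minGens_le_of_primitive_in_K3 (T : Submodule ℤ (K3Ix → ℤ))
    (hprim : IsPrimitiveSubmodule T)
    (hnondeg : ∀ v ∈ T, (∀ w ∈ T, v ⬝ᵥ K3.mulVec w = 0) → v = 0) :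
    minGens (DiscGroupSub K3 T) ≤
      min (Module.finrank ℤ ↥T) (22 - Module.finrank ℤ ↥T) := by
  classical
  haveI : Module.Finite ℤ ↥T := Module.Finite.iff_fg.mpr (IsNoetherian.noetherian T)
  obtain ⟨π, hπ⟩ := exists_retraction T hprim
  haveI : NoZeroSMulDivisors ℤ ((K3Ix → ℤ) ⧸ T) := by
    refine ⟨fun {k x} h => ?_⟩
    by_cases hk : k = 0
    · exact Or.inl hk
    · refine Or.inr ?_
      obtain ⟨v, rfl⟩ := T.mkQ_surjective x
      rw [← _root_.map_smul, Submodule.mkQ_apply, Submodule.Quotient.mk_eq_zero] at h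
      rw [Submodule.mkQ_apply, Submodule.Quotient.mk_eq_zero]
      exact hprim v k hk h
  -- Bound 1 : minGens ≤ finrank T (the dual of T is free of rank finrank T).
  have h1 : minGens (DiscGroupSub K3 T) ≤ Module.finrank ℤ ↥T := by
    let b := Module.Free.chooseBasis ℤ ↥T
    have hcard : (Finset.univ.image b.dualBasis).card = Module.finrank ℤ ↥T := by
      rw [Finset.card_image_of_injective _ b.dualBasis.injective, Finset.card_univ,
        Module.finrank_eq_card_chooseBasisIndex]
    have hspan : Submodule.span ℤ
        ((Finset.univ.image b.dualBasis : Finset (Module.Dual ℤ ↥T)) :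
          Set (Module.Dual ℤ ↥T)) = ⊤ := by
      rw [Finset.coe_image, Finset.coe_univ, Set.image_univ, b.dualBasis.span_eq]
    exact hcard ▸ minGens_le_of_span
      (Submodule.mkQ (LinearMap.range (subToDual K3 T)))
      (Submodule.mkQ_surjective _) _ hspan
  -- Bound 2 : minGens ≤ finrank of the quotient, using unimodularity of K3.
  have hdualsurj : Function.Surjective (T.subtype.dualMap) := by
    intro g
    refine ⟨g ∘ₗ π, ?_⟩
    refine LinearMap.ext fun t => ?_
    show g (π (t : K3Ix → ℤ)) = g t
    rw [hπ]
  set g : (K3Ix → ℤ) →ₗ[ℤ] DiscGroupSub K3 T :=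
    (Submodule.mkQ (LinearMap.range (subToDual K3 T))) ∘ₗ (T.subtype.dualMap ∘ₗ toDual K3)
    with hg
  have hgsurj : Function.Surjective g :=
    (Submodule.mkQ_surjective _).comp (hdualsurj.comp toDual_K3_surjective)
  have hker : T ≤ LinearMap.ker g := by
    intro v hv
    have : T.subtype.dualMap (toDual K3 v) ∈ LinearMap.range (subToDual K3 T) :=
      ⟨⟨v, hv⟩, rfl⟩
    simpa [hg, LinearMap.mem_ker, Submodule.Quotient.mk_eq_zero] using this
  have hg'surj : Function.Surjective (T.liftQ g hker) := by
    intro a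
    obtain ⟨x, hx⟩ := hgsurj a
    exact ⟨T.mkQ x, by rwa [Submodule.mkQ_apply, Submodule.liftQ_apply]⟩
  have h2 : minGens (DiscGroupSub K3 T) ≤ Module.finrank ℤ ((K3Ix → ℤ) ⧸ T) :=
    minGens_le_finrank (T.liftQ g hker) hg'surj
  -- rank computation
  have hadd : Module.finrank ℤ ↥T + Module.finrank ℤ ((K3Ix → ℤ) ⧸ T) = 22 := by
    let e : (K3Ix → ℤ) →ₗ[ℤ] ↥T × ((K3Ix → ℤ) ⧸ T) := π.prod T.mkQ
    have hbij : Function.Bijective e := by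
      constructor
      · intro x y hxy
        have h1 : π x = π y := congrArg Prod.fst hxy
        have h2 : T.mkQ x = T.mkQ y := congrArg Prod.snd hxy
        have hmem : x - y ∈ T := by
          rw [← Submodule.Quotient.mk_eq_zero, ← Submodule.mkQ_apply, map_sub, h2, sub_self]
        have h3 : π ((⟨x - y, hmem⟩ : ↥T) : K3Ix → ℤ) = ⟨x - y, hmem⟩ := hπ _
        have h4 : π (x - y) = 0 := by rw [map_sub, h1, sub_self]
        have h5 : (⟨x - y, hmem⟩ : ↥T) = 0 := by rw [← h3]; exact h4
        have h6 : x - y = 0 := congrArg Subtype.val h5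
        exact sub_eq_zero.mp h6
      · rintro ⟨t, q⟩
        obtain ⟨v, rfl⟩ := T.mkQ_surjective q
        refine ⟨v + ((t - π v : ↥T) : K3Ix → ℤ), ?_⟩
        have hmk : T.mkQ (v + ((t - π v : ↥T) : K3Ix → ℤ)) = T.mkQ v := by
          rw [map_add]
          have : T.mkQ ((t - π v : ↥T) : K3Ix → ℤ) = 0 :=
            (Submodule.Quotient.mk_eq_zero T).2 (t - π v).2
          rw [this, add_zero]
        have hpi : π (v + ((t - π v : ↥T) : K3Ix → ℤ)) = t := by
          rw [map_add, hπ]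
          abel
        show (π _, T.mkQ _) = (t, T.mkQ v)
        rw [hmk, hpi]
    have heq := (LinearEquiv.ofBijective e hbij).finrank_eq
    rw [Module.finrank_prod] at heq
    have hpi : Module.finrank ℤ (K3Ix → ℤ) = 22 := by
      rw [Module.finrank_pi]
      simp
    omega
  refine le_min h1 ?_
  omega

end MaxAlg
end

section
/- The lattice (D4)³ ⊕ U² admits no primitive isometric embedding into the K3 lattice (E8)² ⊕ U³. -/
open Matrix

namespace MaxAlg


set_option linter.unusedSectionVars false

section AuxGauss

open Matrix Finset

/-- quadratic character on `ZMod 2` with values in `ℤ`. -/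
def chi (a : ZMod 2) : ℤ := if a = 0 then 1 else -1

lemma chi_zero' : chi 0 = 1 := rfl

lemma chi_add (a b : ZMod 2) : chi (a + b) = chi a * chi b := by
  revert a b; decide

lemma chi_sq (a : ZMod 2) : chi a ^ 2 = 1 := by revert a; decide

lemma chi_cases (a : ZMod 2) : chi a = 1 ∨ chi a = -1 := by revert a; decide

variable {ι κ : Type*} [Fintype ι] [DecidableEq ι] [Fintype κ] [DecidableEq κ]

/-- canonical integer lift of a mod-2 vector -/
def liftV (x : ι → ZMod 2) : ι → ℤ := fun i => ((x i).val : ℤ)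

/-- reduction mod 2 of an integer vector -/
def redV (v : ι → ℤ) : ι → ZMod 2 := fun i => ((v i : ℤ) : ZMod 2)

lemma redV_liftV (x : ι → ZMod 2) : redV (liftV x) = x := by
  funext i
  simp [redV, liftV, ZMod.natCast_val, ZMod.cast_id]

lemma redV_eq_comp (v : ι → ℤ) : redV v = (Int.castRingHom (ZMod 2)) ∘ v := rfl

lemma redV_mulVec (M : Matrix κ ι ℤ) (v : ι → ℤ) :
    redV (M.mulVec v) = (M.map (Int.cast : ℤ → ZMod 2)).mulVec (redV v) := by
  funext i
  exact RingHom.map_mulVec (Int.castRingHom (ZMod 2)) M v i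

lemma redV_dot (M : Matrix ι ι ℤ) (v w : ι → ℤ) :
    ((v ⬝ᵥ M.mulVec w : ℤ) : ZMod 2)
      = redV v ⬝ᵥ (M.map (Int.cast : ℤ → ZMod 2)).mulVec (redV w) := by
  rw [show ((v ⬝ᵥ M.mulVec w : ℤ) : ZMod 2) = (Int.castRingHom (ZMod 2)) (v ⬝ᵥ M.mulVec w) from rfl,
    RingHom.map_dotProduct, ← redV_eq_comp, ← redV_mulVec]
  rfl

lemma dot_symm (M : Matrix ι ι ℤ) (hM : Mᵀ = M) (v w : ι → ℤ) :
    v ⬝ᵥ M.mulVec w = w ⬝ᵥ M.mulVec v := by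
  rw [Matrix.dotProduct_mulVec]
  nth_rewrite 1 [← hM]
  rw [Matrix.vecMul_transpose, dotProduct_comm]

lemma f2_self_dot (m : Matrix ι ι (ZMod 2)) (hm : mᵀ = m) (hd : ∀ i, m i i = 0)
    (x : ι → ZMod 2) : x ⬝ᵥ m.mulVec x = 0 := by
  classical
  have expand : x ⬝ᵥ m.mulVec x = ∑ p ∈ (univ ×ˢ univ : Finset (ι × ι)),
      x p.1 * (m p.1 p.2 * x p.2) := by
    rw [Finset.sum_product]
    simp only [dotProduct, Matrix.mulVec, dotProduct, Finset.mul_sum]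
  rw [expand, ← Finset.sum_filter_add_sum_filter_not (univ ×ˢ univ) (fun p => p.1 = p.2)]
  have h1 : ∑ p ∈ (univ ×ˢ univ : Finset (ι × ι)).filter (fun p => p.1 = p.2),
      x p.1 * (m p.1 p.2 * x p.2) = 0 := by
    apply Finset.sum_eq_zero
    intro p hp
    simp only [Finset.mem_filter] at hp
    rw [← hp.2, hd p.1]
    ring
  have h2 : ∑ p ∈ (univ ×ˢ univ : Finset (ι × ι)).filter (fun p => ¬ p.1 = p.2),
      x p.1 * (m p.1 p.2 * x p.2) = 0 := by
    apply Finset.sum_involution (fun p _ => (p.2, p.1))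
    · intro p _
      have hsymm : m p.2 p.1 = m p.1 p.2 := by
        conv_lhs => rw [← hm, Matrix.transpose_apply]
      simp only [hsymm]
      have : x p.1 * (m p.1 p.2 * x p.2) = x p.2 * (m p.1 p.2 * x p.1) := by ring
      rw [this, ← two_mul]
      have h2 : (2 : ZMod 2) = 0 := by decide
      rw [h2, zero_mul]
    · intro p hp _
      simp only [Finset.mem_filter] at hp
      intro hcontra
      exact hp.2 (congrArg Prod.snd hcontra)
    · intro p hp
      simp only [Finset.mem_filter, Finset.mem_product, Finset.mem_univ, true_and] at hp ⊢
      exact fun h => hp h.symm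
    · intro p _
      rfl
  rw [h1, h2, add_zero]

lemma even_self_dot (M : Matrix ι ι ℤ) (hM : Mᵀ = M) (hd : ∀ i, 2 ∣ M i i) (v : ι → ℤ) :
    2 ∣ v ⬝ᵥ M.mulVec v := by
  have h0 : ((v ⬝ᵥ M.mulVec v : ℤ) : ZMod 2) = 0 := by
    rw [redV_dot]
    apply f2_self_dot
    · rw [← Matrix.transpose_map, hM]
    · intro i
      have := hd i
      simp only [Matrix.map_apply]
      rwa [ZMod.intCast_zmod_eq_zero_iff_dvd]
  rwa [ZMod.intCast_zmod_eq_zero_iff_dvd] at h0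

/-- integral half-norm -/
def qi (M : Matrix ι ι ℤ) (v : ι → ℤ) : ℤ := v ⬝ᵥ M.mulVec v / 2

/-- quadratic form mod 2 induced by an even symmetric integer matrix -/
def qf (M : Matrix ι ι ℤ) (x : ι → ZMod 2) : ZMod 2 := ((qi M (liftV x) : ℤ) : ZMod 2)

lemma two_qi (M : Matrix ι ι ℤ) (hM : Mᵀ = M) (hd : ∀ i, 2 ∣ M i i) (v : ι → ℤ) :
    2 * qi M v = v ⬝ᵥ M.mulVec v :=
  Int.mul_ediv_cancel' (even_self_dot M hM hd v)

lemma qi_add (M : Matrix ι ι ℤ) (hM : Mᵀ = M) (hd : ∀ i, 2 ∣ M i i) (v w : ι → ℤ) :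
    qi M (v + w) = qi M v + qi M w + v ⬝ᵥ M.mulVec w := by
  have expand : (v + w) ⬝ᵥ M.mulVec (v + w)
      = v ⬝ᵥ M.mulVec v + w ⬝ᵥ M.mulVec w + 2 * (v ⬝ᵥ M.mulVec w) := by
    rw [Matrix.mulVec_add, add_dotProduct, dotProduct_add, dotProduct_add,
      dot_symm M hM w v]
    ring
  obtain ⟨a, ha⟩ := even_self_dot M hM hd v
  obtain ⟨b, hb⟩ := even_self_dot M hM hd w
  have h3 : 2 * qi M (v + w) = 2 * (qi M v + qi M w + v ⬝ᵥ M.mulVec w) := by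
    rw [two_qi M hM hd, expand]
    unfold qi
    rw [ha, hb]
    omega
  omega

lemma qi_congr (M : Matrix ι ι ℤ) (hM : Mᵀ = M) (hd : ∀ i, 2 ∣ M i i) (v w : ι → ℤ)
    (h : redV v = redV w) : ((qi M v : ℤ) : ZMod 2) = ((qi M w : ℤ) : ZMod 2) := by
  have hdvd : ∀ i, 2 ∣ (v i - w i) := by
    intro i
    have := congrFun h i
    simp only [redV] at this
    have : ((v i - w i : ℤ) : ZMod 2) = 0 := by
      push_cast
      rw [this]; ring
    rwa [ZMod.intCast_zmod_eq_zero_iff_dvd] at this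
  set u : ι → ℤ := fun i => (v i - w i) / 2 with hu
  have hv : v = w + (2 : ℤ) • u := by
    funext i
    have := hdvd i
    simp only [Pi.add_apply, Pi.smul_apply, smul_eq_mul, hu]
    omega
  have h2u : qi M ((2 : ℤ) • u) = 2 * (u ⬝ᵥ M.mulVec u) := by
    unfold qi
    rw [Matrix.mulVec_smul, smul_dotProduct, dotProduct_smul]
    simp only [smul_eq_mul]
    omega
  have hbil : w ⬝ᵥ M.mulVec ((2 : ℤ) • u) = 2 * (w ⬝ᵥ M.mulVec u) := by
    rw [Matrix.mulVec_smul, dotProduct_smul]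
    simp [smul_eq_mul]
  have key : qi M v = qi M w + 2 * (u ⬝ᵥ M.mulVec u + w ⬝ᵥ M.mulVec u) := by
    rw [hv, qi_add M hM hd, h2u, hbil]; ring
  rw [key]
  push_cast
  have h2 : ((2 : ZMod 2)) = 0 := by decide
  rw [h2]
  ring

lemma qf_red (M : Matrix ι ι ℤ) (hM : Mᵀ = M) (hd : ∀ i, 2 ∣ M i i) (v : ι → ℤ) :
    qf M (redV v) = ((qi M v : ℤ) : ZMod 2) := by
  unfold qf
  exact qi_congr M hM hd _ _ (redV_liftV (redV v))

lemma qf_zero (M : Matrix ι ι ℤ) : qf M 0 = 0 := by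
  have h : liftV (0 : ι → ZMod 2) = 0 := funext fun i => by simp [liftV]
  simp [qf, qi, h]

lemma qf_add (M : Matrix ι ι ℤ) (hM : Mᵀ = M) (hd : ∀ i, 2 ∣ M i i) (x y : ι → ZMod 2) :
    qf M (x + y) = qf M x + qf M y + x ⬝ᵥ (M.map (Int.cast : ℤ → ZMod 2)).mulVec y := by
  have hxy : redV (liftV x + liftV y) = x + y := by
    funext i
    simp only [redV, Pi.add_apply, Int.cast_add]
    rw [← redV, ← redV, redV_liftV, redV_liftV]
  calc qf M (x + y) = qf M (redV (liftV x + liftV y)) := by rw [hxy]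
    _ = ((qi M (liftV x + liftV y) : ℤ) : ZMod 2) := qf_red M hM hd _
    _ = ((qi M (liftV x) : ℤ) : ZMod 2) + ((qi M (liftV y) : ℤ) : ZMod 2)
        + ((liftV x ⬝ᵥ M.mulVec (liftV y) : ℤ) : ZMod 2) := by
        rw [qi_add M hM hd]; push_cast; ring
    _ = qf M x + qf M y + x ⬝ᵥ (M.map (Int.cast : ℤ → ZMod 2)).mulVec y := by
        rw [redV_dot, redV_liftV, redV_liftV]; rfl

end AuxGauss


section AuxDsum

open Matrix Finset

variable {ι κ : Type*} [Fintype ι] [DecidableEq ι] [Fintype κ] [DecidableEq κ]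

lemma dsum_sym (M : Matrix ι ι ℤ) (N : Matrix κ κ ℤ) (hM : Mᵀ = M) (hN : Nᵀ = N) :
    (dsum M N)ᵀ = dsum M N := by
  unfold dsum
  rw [Matrix.fromBlocks_transpose, hM, hN]
  simp

lemma dsum_diag_even (M : Matrix ι ι ℤ) (N : Matrix κ κ ℤ)
    (hM : ∀ i, 2 ∣ M i i) (hN : ∀ i, 2 ∣ N i i) : ∀ i, 2 ∣ dsum M N i i := by
  rintro (i | j)
  · exact hM i
  · exact hN j

lemma liftV_elim (x : ι ⊕ κ → ZMod 2) :
    liftV x = Sum.elim (liftV (x ∘ Sum.inl)) (liftV (x ∘ Sum.inr)) := by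
  funext i
  cases i <;> rfl

lemma dot_dsum_elim (M : Matrix ι ι ℤ) (N : Matrix κ κ ℤ) (u₁ v₁ : ι → ℤ) (u₂ v₂ : κ → ℤ) :
    Sum.elim u₁ u₂ ⬝ᵥ (dsum M N).mulVec (Sum.elim v₁ v₂)
      = u₁ ⬝ᵥ M.mulVec v₁ + u₂ ⬝ᵥ N.mulVec v₂ := by
  unfold dsum
  rw [Matrix.fromBlocks_mulVec]
  simp [sumElim_dotProduct_sumElim]

lemma qi_dsum (M : Matrix ι ι ℤ) (N : Matrix κ κ ℤ)
    (hM : Mᵀ = M) (hdM : ∀ i, 2 ∣ M i i) (hN : Nᵀ = N) (hdN : ∀ i, 2 ∣ N i i)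
    (u : ι → ℤ) (v : κ → ℤ) :
    qi (dsum M N) (Sum.elim u v) = qi M u + qi N v := by
  unfold qi
  rw [dot_dsum_elim]
  obtain ⟨a, ha⟩ := even_self_dot M hM hdM u
  obtain ⟨b, hb⟩ := even_self_dot N hN hdN v
  rw [ha, hb]
  omega

lemma qf_dsum (M : Matrix ι ι ℤ) (N : Matrix κ κ ℤ)
    (hM : Mᵀ = M) (hdM : ∀ i, 2 ∣ M i i) (hN : Nᵀ = N) (hdN : ∀ i, 2 ∣ N i i)
    (x : ι ⊕ κ → ZMod 2) :
    qf (dsum M N) x = qf M (x ∘ Sum.inl) + qf N (x ∘ Sum.inr) := by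
  unfold qf
  rw [liftV_elim, qi_dsum M N hM hdM hN hdN]
  push_cast
  ring

/-- total Gauss sum of the mod-2 quadratic form of an even lattice -/
def gSum (M : Matrix ι ι ℤ) : ℤ := ∑ x : ι → ZMod 2, chi (qf M x)

lemma gSum_dsum (M : Matrix ι ι ℤ) (N : Matrix κ κ ℤ)
    (hM : Mᵀ = M) (hdM : ∀ i, 2 ∣ M i i) (hN : Nᵀ = N) (hdN : ∀ i, 2 ∣ N i i) :
    gSum (dsum M N) = gSum M * gSum N := by
  unfold gSum
  rw [← Equiv.sum_comp (Equiv.sumArrowEquivProdArrow ι κ (ZMod 2)).symm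
    (fun x => chi (qf (dsum M N) x))]
  rw [Fintype.sum_prod_type, Finset.sum_mul_sum]
  apply Finset.sum_congr rfl
  intro p _
  apply Finset.sum_congr rfl
  intro q _
  have he : (Equiv.sumArrowEquivProdArrow ι κ (ZMod 2)).symm (p, q) = Sum.elim p q := rfl
  rw [he, qf_dsum M N hM hdM hN hdN, chi_add, Sum.elim_comp_inl, Sum.elim_comp_inr]

end AuxDsum

section AuxBlocks

open Matrix

lemma E8_sym : E8ᵀ = E8 := by
  have : ∀ i j, E8ᵀ i j = E8 i j := by intro i j; fin_cases i <;> fin_cases j <;> decide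
  exact Matrix.ext this

lemma E8_diag_even : ∀ i, 2 ∣ E8 i i := by decide

lemma D4_sym : D4ᵀ = D4 := by
  have : ∀ i j, D4ᵀ i j = D4 i j := by intro i j; fin_cases i <;> fin_cases j <;> decide
  exact Matrix.ext this

lemma D4_diag_even : ∀ i, 2 ∣ D4 i i := by decide

lemma U_sym : Uᵀ = U := by
  have : ∀ i j, Uᵀ i j = U i j := by intro i j; fin_cases i <;> fin_cases j <;> decide
  exact Matrix.ext this

lemma U_diag_even : ∀ i, 2 ∣ U i i := by decide

lemma K3_sym : K3ᵀ = K3 :=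
  dsum_sym _ _ (dsum_sym _ _ E8_sym E8_sym)
    (dsum_sym _ _ U_sym (dsum_sym _ _ U_sym U_sym))

lemma K3_diag_even : ∀ i, 2 ∣ K3 i i := by
  unfold K3
  apply dsum_diag_even
  · exact dsum_diag_even _ _ E8_diag_even E8_diag_even
  · exact dsum_diag_even _ _ U_diag_even (dsum_diag_even _ _ U_diag_even U_diag_even)

lemma T0_sym : T0ᵀ = T0 := by
  unfold T0
  apply dsum_sym
  · exact dsum_sym _ _ D4_sym (dsum_sym _ _ D4_sym D4_sym)
  · exact dsum_sym _ _ U_sym U_sym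

lemma T0_diag_even : ∀ i, 2 ∣ T0 i i := by
  unfold T0
  apply dsum_diag_even
  · exact dsum_diag_even _ _ D4_diag_even (dsum_diag_even _ _ D4_diag_even D4_diag_even)
  · exact dsum_diag_even _ _ U_diag_even U_diag_even

set_option maxRecDepth 100000 in
lemma gSum_E8 : gSum E8 = 16 := by decide

set_option maxRecDepth 100000 in
lemma gSum_D4 : gSum D4 = -8 := by decide

set_option maxRecDepth 100000 in
lemma gSum_U : gSum U = 2 := by decide

lemma gSum_K3 : gSum K3 = 2048 := by
  unfold K3
  rw [gSum_dsum _ _ (dsum_sym _ _ E8_sym E8_sym)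
      (dsum_diag_even _ _ E8_diag_even E8_diag_even)
      (dsum_sym _ _ U_sym (dsum_sym _ _ U_sym U_sym))
      (dsum_diag_even _ _ U_diag_even (dsum_diag_even _ _ U_diag_even U_diag_even)),
    gSum_dsum _ _ E8_sym E8_diag_even E8_sym E8_diag_even,
    gSum_dsum _ _ U_sym U_diag_even (dsum_sym _ _ U_sym U_sym)
      (dsum_diag_even _ _ U_diag_even U_diag_even),
    gSum_dsum _ _ U_sym U_diag_even U_sym U_diag_even,
    gSum_E8, gSum_U]
  norm_num

lemma T0_gSum : gSum T0 = -2048 := by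
  unfold T0
  rw [gSum_dsum _ _ (dsum_sym _ _ D4_sym (dsum_sym _ _ D4_sym D4_sym))
      (dsum_diag_even _ _ D4_diag_even (dsum_diag_even _ _ D4_diag_even D4_diag_even))
      (dsum_sym _ _ U_sym U_sym)
      (dsum_diag_even _ _ U_diag_even U_diag_even),
    gSum_dsum _ _ D4_sym D4_diag_even (dsum_sym _ _ D4_sym D4_sym)
      (dsum_diag_even _ _ D4_diag_even D4_diag_even),
    gSum_dsum _ _ D4_sym D4_diag_even D4_sym D4_diag_even,
    gSum_dsum _ _ U_sym U_diag_even U_sym U_diag_even,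
    gSum_D4, gSum_U]
  norm_num

end AuxBlocks


section AuxChar

open Matrix Finset

variable {ι κ : Type*} [Fintype ι] [DecidableEq ι] [Fintype κ] [DecidableEq κ]

lemma chi_finset_sum {α : Type*} (s : Finset α) (g : α → ZMod 2) :
    chi (∑ i ∈ s, g i) = ∏ i ∈ s, chi (g i) := by
  classical
  induction s using Finset.cons_induction with
  | empty => simp [chi_zero']
  | cons a s ha ih => rw [Finset.sum_cons, Finset.prod_cons, chi_add, ih]

lemma chi_single_sum : ∀ b : ZMod 2, (∑ a : ZMod 2, chi (b * a)) = if b = 0 then 2 else 0 := by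
  decide

lemma char_sum (c : ι → ZMod 2) :
    ∑ y : ι → ZMod 2, chi (c ⬝ᵥ y) = if c = 0 then (2 : ℤ) ^ (Fintype.card ι) else 0 := by
  have h1 : ∀ y : ι → ZMod 2, chi (c ⬝ᵥ y) = ∏ i, chi (c i * y i) := fun y =>
    chi_finset_sum univ (fun i => c i * y i)
  simp only [h1]
  rw [← Fintype.piFinset_univ, ← Finset.prod_univ_sum (fun _ => (univ : Finset (ZMod 2)))
    (fun i a => chi (c i * a))]
  by_cases hc : c = 0
  · subst hc
    simp only [chi_single_sum, Pi.zero_apply, if_pos rfl]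
    rw [Finset.prod_const, Finset.card_univ]
    simp
  · rw [if_neg hc]
    obtain ⟨i, hi⟩ := Function.ne_iff.mp hc
    simp only [Pi.zero_apply] at hi
    apply Finset.prod_eq_zero (Finset.mem_univ i)
    rw [chi_single_sum, if_neg hi]

lemma gauss_translate (M : Matrix ι ι ℤ) (hM : Mᵀ = M) (hd : ∀ i, 2 ∣ M i i) (u : ι → ZMod 2) :
    ∑ x : ι → ZMod 2, chi (qf M x + x ⬝ᵥ (M.map (Int.cast : ℤ → ZMod 2)).mulVec u)
      = chi (qf M u) * gSum M := by
  have key : ∀ x : ι → ZMod 2,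
      chi (qf M x + x ⬝ᵥ (M.map (Int.cast : ℤ → ZMod 2)).mulVec u)
        = chi (qf M (x + u)) * chi (qf M u) := by
    intro x
    rw [qf_add M hM hd, chi_add, chi_add, chi_add]
    linear_combination (-(chi (qf M x) * chi (x ⬝ᵥ (M.map (Int.cast : ℤ → ZMod 2)).mulVec u)))
      * chi_sq (qf M u)
  simp only [key]
  rw [← Finset.sum_mul, mul_comm]
  congr 1
  unfold gSum
  exact Equiv.sum_comp (Equiv.addRight u) (fun z => chi (qf M z))

end AuxChar


section AuxInverse

open Matrix

/-- inverse of E₈ mod 2 -/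
def E8i : Matrix (Fin 8) (Fin 8) (ZMod 2) :=
  !![0,1,1,0,0,0,0,0; 1,0,0,1,0,1,0,1; 1,0,0,0,0,0,0,0; 0,1,0,0,0,0,0,0;
     0,0,0,0,0,1,0,1; 0,1,0,0,1,0,0,0; 0,0,0,0,0,0,0,1; 0,1,0,0,1,0,1,0]

lemma E8i_mul_left : (E8.map (Int.cast : ℤ → ZMod 2)) * E8i = 1 := by decide
lemma E8i_mul_right : E8i * (E8.map (Int.cast : ℤ → ZMod 2)) = 1 := by decide
lemma U_mul_self : (U.map (Int.cast : ℤ → ZMod 2)) * (U.map (Int.cast : ℤ → ZMod 2)) = 1 := by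
  decide

/-- inverse of the K3 Gram matrix mod 2 -/
def K3i : Matrix K3Ix K3Ix (ZMod 2) :=
  Matrix.fromBlocks (Matrix.fromBlocks E8i 0 0 E8i) 0 0
    (Matrix.fromBlocks (U.map (Int.cast : ℤ → ZMod 2)) 0 0
      (Matrix.fromBlocks (U.map (Int.cast : ℤ → ZMod 2)) 0 0
        (U.map (Int.cast : ℤ → ZMod 2))))

lemma dsum_map {ι κ : Type*} (M : Matrix ι ι ℤ) (N : Matrix κ κ ℤ) :
    (dsum M N).map (Int.cast : ℤ → ZMod 2)
      = Matrix.fromBlocks (M.map (Int.cast : ℤ → ZMod 2)) 0 0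
          (N.map (Int.cast : ℤ → ZMod 2)) := by
  unfold dsum
  rw [Matrix.fromBlocks_map]
  congr 1

lemma K3_map_eq : K3.map (Int.cast : ℤ → ZMod 2)
    = Matrix.fromBlocks
        (Matrix.fromBlocks (E8.map (Int.cast : ℤ → ZMod 2)) 0 0
          (E8.map (Int.cast : ℤ → ZMod 2))) 0 0
        (Matrix.fromBlocks (U.map (Int.cast : ℤ → ZMod 2)) 0 0
          (Matrix.fromBlocks (U.map (Int.cast : ℤ → ZMod 2)) 0 0
            (U.map (Int.cast : ℤ → ZMod 2)))) := by
  unfold K3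
  rw [dsum_map, dsum_map, dsum_map, dsum_map]

lemma K3i_mul_left : (K3.map (Int.cast : ℤ → ZMod 2)) * K3i = 1 := by
  rw [K3_map_eq]
  unfold K3i
  simp only [Matrix.fromBlocks_multiply, Matrix.mul_zero, Matrix.zero_mul, add_zero, zero_add,
    Matrix.mul_one, E8i_mul_left, U_mul_self]
  rw [Matrix.fromBlocks_one, Matrix.fromBlocks_one, Matrix.fromBlocks_one, Matrix.fromBlocks_one]

lemma K3i_mul_right : K3i * (K3.map (Int.cast : ℤ → ZMod 2)) = 1 := by
  rw [K3_map_eq]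
  unfold K3i
  simp only [Matrix.fromBlocks_multiply, Matrix.mul_zero, Matrix.zero_mul, add_zero, zero_add,
    Matrix.mul_one, E8i_mul_right, U_mul_self]
  rw [Matrix.fromBlocks_one, Matrix.fromBlocks_one, Matrix.fromBlocks_one, Matrix.fromBlocks_one]

end AuxInverse

/-- The lattice `(D4)³ ⊕ U²` admits no primitive isometric embedding into
the K3 lattice `(E8)² ⊕ U³`. -/
theorem no_primitive_embedding_T0_K3 :
    ¬ ∃ f : (T0Ix → ℤ) →ₗ[ℤ] (K3Ix → ℤ), IsPrimitiveEmbedding T0 K3 f := by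
  classical
  rintro ⟨f, hinj, hiso, hprim⟩
  set A : Matrix K3Ix T0Ix ℤ := LinearMap.toMatrix' f with hA
  have hfA : ∀ v, f v = A.mulVec v := by
    intro v
    rw [hA, ← Matrix.toLin'_apply, Matrix.toLin'_toMatrix']
  set Ab : Matrix K3Ix T0Ix (ZMod 2) := A.map (Int.cast : ℤ → ZMod 2) with hAb
  set Kb : Matrix K3Ix K3Ix (ZMod 2) := K3.map (Int.cast : ℤ → ZMod 2) with hKb
  have hcardT : Fintype.card T0Ix = 16 := by simp
  have hcardK : Fintype.card K3Ix = 22 := by simp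
  -- the mod-2 isometry property
  have hIso : ∀ v w : T0Ix → ℤ,
      (A.mulVec v) ⬝ᵥ K3.mulVec (A.mulVec w) = v ⬝ᵥ T0.mulVec w := by
    intro v w
    rw [← hfA, ← hfA]
    exact hiso v w
  have hAbred : ∀ v : T0Ix → ℤ, redV (A.mulVec v) = Ab.mulVec (redV v) :=
    fun v => redV_mulVec A v
  have hq : ∀ y : T0Ix → ZMod 2, qf K3 (Ab.mulVec y) = qf T0 y := by
    intro y
    have h1 : Ab.mulVec y = redV (A.mulVec (liftV y)) := by
      rw [hAbred, redV_liftV]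
    rw [h1, qf_red K3 K3_sym K3_diag_even]
    have h2 : qi K3 (A.mulVec (liftV y)) = qi T0 (liftV y) := by
      unfold qi
      rw [hIso]
    rw [h2, ← qf_red T0 T0_sym T0_diag_even, redV_liftV]
  -- mod-2 injectivity from primitivity
  have hker : ∀ x : T0Ix → ZMod 2, Ab.mulVec x = 0 → x = 0 := by
    intro x hx
    set w := liftV x with hw
    have h1 : redV (A.mulVec w) = 0 := by
      rw [hAbred, hw, redV_liftV, hx]
    have h2 : ∀ i, 2 ∣ (A.mulVec w) i := by
      intro i
      have := congrFun h1 i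
      simp only [redV, Pi.zero_apply] at this
      rwa [ZMod.intCast_zmod_eq_zero_iff_dvd] at this
    set u : K3Ix → ℤ := fun i => (A.mulVec w) i / 2 with hu
    have h3 : (2 : ℤ) • u = A.mulVec w := by
      funext i
      have := h2 i
      simp only [Pi.smul_apply, smul_eq_mul, hu]
      omega
    have h4 : (2 : ℤ) • u ∈ LinearMap.range f := by
      rw [h3]
      exact ⟨w, (hfA w)⟩

    obtain ⟨y, hy⟩ := hprim u 2 (by norm_num) h4
    have h5 : f w = f ((2 : ℤ) • y) := by
      rw [LinearMap.map_smul, hy, hfA w, ← h3]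
    have h6 : w = (2 : ℤ) • y := hinj h5
    have h7 : x = redV ((2 : ℤ) • y) := by
      rw [← h6, hw, redV_liftV]
    rw [h7]
    funext i
    simp only [redV, Pi.smul_apply, smul_eq_mul]
    push_cast
    have h8 : ((2 : ZMod 2)) = 0 := by decide
    rw [h8, zero_mul]
    rfl
  -- rank and kernel cardinality
  have hinj2 : Function.Injective (Matrix.mulVecLin Ab) := by
    rw [← LinearMap.ker_eq_bot, LinearMap.ker_eq_bot']
    intro m hm
    exact hker m hm
  have hrank : Ab.rank = 16 := by
    rw [Matrix.rank, LinearMap.finrank_range_of_inj hinj2,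
      Module.finrank_fintype_fun_eq_card, hcardT]
  have hfinrank_ker : Module.finrank (ZMod 2) (LinearMap.ker (Matrix.mulVecLin Abᵀ)) = 6 := by
    have h22 : Module.finrank (ZMod 2) (K3Ix → ZMod 2) = 22 := by
      rw [Module.finrank_fintype_fun_eq_card, hcardK]
    have hrn := LinearMap.finrank_range_add_finrank_ker (Matrix.mulVecLin Abᵀ)
    rw [h22] at hrn
    have hrT : Module.finrank (ZMod 2) (LinearMap.range (Matrix.mulVecLin Abᵀ)) = 16 := by
      have : Abᵀ.rank = 16 := by rw [Matrix.rank_transpose]; exact hrank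
      rw [← this]
      rfl
    rw [hrT] at hrn
    omega
  have hcard_ker : Fintype.card (LinearMap.ker (Matrix.mulVecLin Abᵀ)) = 64 := by
    rw [Module.card_eq_pow_finrank (K := ZMod 2), hfinrank_ker, ZMod.card]
    norm_num
  -- transfer cardinality to the radical condition
  set P : (K3Ix → ZMod 2) → Prop := fun x => Matrix.vecMul x (Kb * Ab) = 0 with hP
  have hvm : ∀ z : K3Ix → ZMod 2, Matrix.vecMul z Ab = Matrix.mulVec Abᵀ z := by
    intro z
    conv_lhs => rw [← Matrix.transpose_transpose Ab, Matrix.vecMul_transpose]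
  have e1 : {x : K3Ix → ZMod 2 // P x} ≃ {z : K3Ix → ZMod 2 // Matrix.vecMul z Ab = 0} :=
    { toFun := fun p => ⟨Matrix.vecMul p.1 Kb, by
        rw [Matrix.vecMul_vecMul]
        exact p.2⟩
      invFun := fun p => ⟨Matrix.vecMul p.1 K3i, by
        show Matrix.vecMul (Matrix.vecMul p.1 K3i) (Kb * Ab) = 0
        rw [Matrix.vecMul_vecMul, ← Matrix.mul_assoc, hKb, K3i_mul_right, Matrix.one_mul]
        exact p.2⟩
      left_inv := fun p => by
        ext1
        show Matrix.vecMul (Matrix.vecMul p.1 Kb) K3i = p.1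
        rw [Matrix.vecMul_vecMul, hKb, K3i_mul_left, Matrix.vecMul_one]
      right_inv := fun p => by
        ext1
        show Matrix.vecMul (Matrix.vecMul p.1 K3i) Kb = p.1
        rw [Matrix.vecMul_vecMul, hKb, K3i_mul_right, Matrix.vecMul_one] }
  have e2 : {z : K3Ix → ZMod 2 // Matrix.vecMul z Ab = 0}
      ≃ LinearMap.ker (Matrix.mulVecLin Abᵀ) :=
    Equiv.subtypeEquivRight (fun z => by
      rw [hvm z, LinearMap.mem_ker, Matrix.mulVecLin_apply])
  have hcard_filter : (Finset.univ.filter P).card = 64 := by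
    rw [← Fintype.card_subtype]
    rw [Fintype.card_congr (e1.trans e2)]
    exact hcard_ker
  -- the double character sum, two ways
  set S : ℤ := ∑ x : K3Ix → ZMod 2, if P x then chi (qf K3 x) else 0 with hS
  have way1 : ∑ x : K3Ix → ZMod 2, ∑ y : T0Ix → ZMod 2,
      chi (qf K3 x + x ⬝ᵥ Kb.mulVec (Ab.mulVec y)) = 2 ^ 16 * S := by
    have inner : ∀ x : K3Ix → ZMod 2,
        ∑ y : T0Ix → ZMod 2, chi (qf K3 x + x ⬝ᵥ Kb.mulVec (Ab.mulVec y))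
          = if P x then 2 ^ 16 * chi (qf K3 x) else 0 := by
      intro x
      have hrw : ∀ y : T0Ix → ZMod 2,
          x ⬝ᵥ Kb.mulVec (Ab.mulVec y) = (Matrix.vecMul x (Kb * Ab)) ⬝ᵥ y := by
        intro y
        rw [Matrix.mulVec_mulVec, Matrix.dotProduct_mulVec]
      simp only [hrw, chi_add]
      rw [← Finset.mul_sum, char_sum, hcardT]
      by_cases hx : P x
      · rw [if_pos hx, if_pos hx]
        ring
      · rw [if_neg hx, if_neg hx, mul_zero]
    calc ∑ x : K3Ix → ZMod 2, ∑ y : T0Ix → ZMod 2,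
        chi (qf K3 x + x ⬝ᵥ Kb.mulVec (Ab.mulVec y))
        = ∑ x : K3Ix → ZMod 2, if P x then 2 ^ 16 * chi (qf K3 x) else 0 := by
          exact Finset.sum_congr rfl (fun x _ => inner x)
      _ = 2 ^ 16 * S := by
          rw [hS, Finset.mul_sum]
          exact Finset.sum_congr rfl (fun x _ => by
            by_cases hx : P x
            · rw [if_pos hx, if_pos hx]
            · rw [if_neg hx, if_neg hx, mul_zero])
  have way2 : ∑ x : K3Ix → ZMod 2, ∑ y : T0Ix → ZMod 2,
      chi (qf K3 x + x ⬝ᵥ Kb.mulVec (Ab.mulVec y)) = gSum K3 * gSum T0 := by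
    rw [Finset.sum_comm]
    have inner2 : ∀ y : T0Ix → ZMod 2,
        ∑ x : K3Ix → ZMod 2, chi (qf K3 x + x ⬝ᵥ Kb.mulVec (Ab.mulVec y))
          = chi (qf T0 y) * gSum K3 := by
      intro y
      have ht := gauss_translate K3 K3_sym K3_diag_even (Ab.mulVec y)
      rw [hKb]
      rw [ht, hq y]
    calc ∑ y : T0Ix → ZMod 2, ∑ x : K3Ix → ZMod 2,
        chi (qf K3 x + x ⬝ᵥ Kb.mulVec (Ab.mulVec y))
        = ∑ y : T0Ix → ZMod 2, chi (qf T0 y) * gSum K3 :=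
          Finset.sum_congr rfl (fun y _ => inner2 y)
      _ = gSum K3 * gSum T0 := by
          rw [← Finset.sum_mul, mul_comm]
          rfl
  have hSval : S = -64 := by
    have h1 : 2 ^ 16 * S = 2048 * (-2048 : ℤ) := by
      rw [← way1, way2, gSum_K3, T0_gSum]
    have h2 : (2 : ℤ) ^ 16 = 65536 := by norm_num
    rw [h2] at h1
    omega
  -- final contradiction
  have hSfilter : S = ∑ x ∈ Finset.univ.filter P, chi (qf K3 x) := by
    rw [hS, Finset.sum_filter]
  have hle : ∀ x ∈ Finset.univ.filter P, -chi (qf K3 x) ≤ (1 : ℤ) := fun x _ => by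
    rcases chi_cases (qf K3 x) with h | h <;> rw [h] <;> norm_num
  have hsum_eq : ∑ x ∈ Finset.univ.filter P, -chi (qf K3 x)
      = ∑ x ∈ Finset.univ.filter P, (1 : ℤ) := by
    rw [Finset.sum_neg_distrib, ← hSfilter, hSval, Finset.sum_const, hcard_filter]
    norm_num
  have hall := (Finset.sum_eq_sum_iff_of_le hle).mp hsum_eq
  have h0mem : (0 : K3Ix → ZMod 2) ∈ Finset.univ.filter P := by
    rw [Finset.mem_filter]
    exact ⟨Finset.mem_univ 0, by rw [hP]; exact Matrix.zero_vecMul _⟩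
  have hfinal := hall 0 h0mem
  rw [qf_zero, chi_zero'] at hfinal
  norm_num at hfinal

end MaxAlg
end

section
/- The lattices (D4)³ ⊕ U² and D4 ⊕ E8 ⊕ U(2) ⊕ U(2) are isometric. -/
open Matrix

namespace MaxAlg
def Pmat : Matrix (Fin 16) (Fin 16) ℤ :=
  !![1, 0, 0, 0, 0, 0, 0, 0, 0, 0, 0, 0, 0, 0, 0, 0;
    0, 1, 0, 0, 0, 0, 0, 0, 0, 0, 0, 0, 0, 0, 0, 0;
    0, 0, 1, 0, 0, 0, 0, 0, 0, 0, 0, 0, 0, 0, 0, 0;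
    0, 0, 0, 1, 0, 0, 0, 0, 0, 0, 0, 0, 0, 0, 0, 0;
    0, 0, 0, 0, -2, 1, -2, 0, 2, 3, -4, 0, -1, 9, 1, -1;
    0, 0, 0, 0, -1, 0, -3, 1, 2, 3, -4, 0, -1, 9, 1, -1;
    0, 0, 0, 0, -2, 1, -4, 0, 1, 2, -3, 1, -1, 7, 0, 0;
    0, 0, 0, 0, -2, 1, -6, 0, 1, 2, -3, 1, -1, 9, 0, 1;
    0, 0, 0, 0, -3, 3, -7, -1, 3, 5, -5, 1, -2, 20, 0, 0;
    0, 0, 0, 0, -2, 1, -4, 0, 2, 2, -2, 0, -1, 9, 0, 0;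
    0, 0, 0, 0, -2, 2, -4, 0, 2, 2, -2, 0, -1, 9, 0, 0;
    0, 0, 0, 0, -1, 2, -3, -1, 2, 2, -2, 0, -1, 8, 0, 0;
    0, 0, 0, 0, -1, 1, -1, 0, 2, 3, -3, 0, -1, 9, 1, -1;
    0, 0, 0, 0, 0, 1, -1, -1, -1, -1, 2, 1, 0, -1, -1, 2;
    0, 0, 0, 0, -1, 2, -2, -1, 1, 3, -2, 0, -1, 9, 0, 0;
    0, 0, 0, 0, 1, -2, 2, 1, -2, -2, 2, -1, 1, -10, 0, 0]

def Qmat : Matrix (Fin 16) (Fin 16) ℤ :=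
  !![1, 0, 0, 0, 0, 0, 0, 0, 0, 0, 0, 0, 0, 0, 0, 0;
    0, 1, 0, 0, 0, 0, 0, 0, 0, 0, 0, 0, 0, 0, 0, 0;
    0, 0, 1, 0, 0, 0, 0, 0, 0, 0, 0, 0, 0, 0, 0, 0;
    0, 0, 0, 1, 0, 0, 0, 0, 0, 0, 0, 0, 0, 0, 0, 0;
    0, 0, 0, 0, -1, 0, 0, 1, -1, 0, 0, 0, 0, -1, 1, -1;
    0, 0, 0, 0, 0, 0, 0, 0, 0, -1, 1, 0, 0, 0, 0, 0;
    0, 0, 0, 0, 0, 0, 0, 1, -2, 1, 0, -1, -1, -1, 2, -2;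
    0, 0, 0, 0, 0, 1, 0, 0, -1, 0, 1, -1, -1, 0, 1, -1;
    0, 0, 0, 0, 4, 4, -1, -7, 7, -3, 0, 3, -1, 7, -7, 6;
    0, 0, 0, 0, 5, 5, -1, -10, 11, -5, 0, 4, 0, 10, -10, 10;
    0, 0, 0, 0, 0, 0, 0, -2, 3, -1, 0, 1, 2, 2, -3, 3;
    0, 0, 0, 0, 2, 2, 0, -5, 6, -3, 0, 2, 1, 5, -6, 5;
    0, 0, 0, 0, 11, 9, -4, -18, 22, -11, 1, 7, -2, 18, -20, 18;
    0, 0, 0, 0, -1, -1, 0, 2, -2, 1, 0, -1, 0, -2, 2, -2;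
    0, 0, 0, 0, -2, -3, 0, 3, -1, 0, 0, 0, 4, -2, 0, 0;
    0, 0, 0, 0, 2, 2, -1, -1, 0, 0, 0, 0, -2, 2, 0, 0]

def GN16 : Matrix (Fin 16) (Fin 16) ℤ :=
  !![2, -1, 0, 0, 0, 0, 0, 0, 0, 0, 0, 0, 0, 0, 0, 0;
    -1, 2, -1, -1, 0, 0, 0, 0, 0, 0, 0, 0, 0, 0, 0, 0;
    0, -1, 2, 0, 0, 0, 0, 0, 0, 0, 0, 0, 0, 0, 0, 0;
    0, -1, 0, 2, 0, 0, 0, 0, 0, 0, 0, 0, 0, 0, 0, 0;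
    0, 0, 0, 0, 2, 0, -1, 0, 0, 0, 0, 0, 0, 0, 0, 0;
    0, 0, 0, 0, 0, 2, 0, -1, 0, 0, 0, 0, 0, 0, 0, 0;
    0, 0, 0, 0, -1, 0, 2, -1, 0, 0, 0, 0, 0, 0, 0, 0;
    0, 0, 0, 0, 0, -1, -1, 2, -1, 0, 0, 0, 0, 0, 0, 0;
    0, 0, 0, 0, 0, 0, 0, -1, 2, -1, 0, 0, 0, 0, 0, 0;
    0, 0, 0, 0, 0, 0, 0, 0, -1, 2, -1, 0, 0, 0, 0, 0;
    0, 0, 0, 0, 0, 0, 0, 0, 0, -1, 2, -1, 0, 0, 0, 0;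
    0, 0, 0, 0, 0, 0, 0, 0, 0, 0, -1, 2, 0, 0, 0, 0;
    0, 0, 0, 0, 0, 0, 0, 0, 0, 0, 0, 0, 0, 2, 0, 0;
    0, 0, 0, 0, 0, 0, 0, 0, 0, 0, 0, 0, 2, 0, 0, 0;
    0, 0, 0, 0, 0, 0, 0, 0, 0, 0, 0, 0, 0, 0, 0, 2;
    0, 0, 0, 0, 0, 0, 0, 0, 0, 0, 0, 0, 0, 0, 2, 0]

def GM16 : Matrix (Fin 16) (Fin 16) ℤ :=
  !![2, -1, 0, 0, 0, 0, 0, 0, 0, 0, 0, 0, 0, 0, 0, 0;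
    -1, 2, -1, -1, 0, 0, 0, 0, 0, 0, 0, 0, 0, 0, 0, 0;
    0, -1, 2, 0, 0, 0, 0, 0, 0, 0, 0, 0, 0, 0, 0, 0;
    0, -1, 0, 2, 0, 0, 0, 0, 0, 0, 0, 0, 0, 0, 0, 0;
    0, 0, 0, 0, 2, -1, 0, 0, 0, 0, 0, 0, 0, 0, 0, 0;
    0, 0, 0, 0, -1, 2, -1, -1, 0, 0, 0, 0, 0, 0, 0, 0;
    0, 0, 0, 0, 0, -1, 2, 0, 0, 0, 0, 0, 0, 0, 0, 0;
    0, 0, 0, 0, 0, -1, 0, 2, 0, 0, 0, 0, 0, 0, 0, 0;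
    0, 0, 0, 0, 0, 0, 0, 0, 2, -1, 0, 0, 0, 0, 0, 0;
    0, 0, 0, 0, 0, 0, 0, 0, -1, 2, -1, -1, 0, 0, 0, 0;
    0, 0, 0, 0, 0, 0, 0, 0, 0, -1, 2, 0, 0, 0, 0, 0;
    0, 0, 0, 0, 0, 0, 0, 0, 0, -1, 0, 2, 0, 0, 0, 0;
    0, 0, 0, 0, 0, 0, 0, 0, 0, 0, 0, 0, 0, 1, 0, 0;
    0, 0, 0, 0, 0, 0, 0, 0, 0, 0, 0, 0, 1, 0, 0, 0;
    0, 0, 0, 0, 0, 0, 0, 0, 0, 0, 0, 0, 0, 0, 0, 1;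
    0, 0, 0, 0, 0, 0, 0, 0, 0, 0, 0, 0, 0, 0, 1, 0]

def eT : T0Ix ≃ Fin 16 :=
  (Equiv.sumCongr ((Equiv.sumCongr (Equiv.refl (Fin 4)) finSumFinEquiv).trans finSumFinEquiv)
    (finSumFinEquiv : Fin 2 ⊕ Fin 2 ≃ Fin 4)).trans finSumFinEquiv

def eK : (Fin 4 ⊕ (Fin 8 ⊕ (Fin 2 ⊕ Fin 2))) ≃ Fin 16 :=
  (Equiv.sumCongr (Equiv.refl (Fin 4))
    ((Equiv.sumCongr (Equiv.refl (Fin 8)) (finSumFinEquiv : Fin 2 ⊕ Fin 2 ≃ Fin 4)).trans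
      finSumFinEquiv)).trans finSumFinEquiv

set_option maxRecDepth 100000 in
lemma hPQ : Pmat * Qmat = 1 := by decide
set_option maxRecDepth 100000 in
lemma hQP : Qmat * Pmat = 1 := by decide
set_option maxRecDepth 400000 in
lemma hGram : Pmatᵀ * GN16 * Pmat = GM16 := by decide
set_option maxRecDepth 100000 in
lemma hN : dsum D4 (dsum E8 (dsum ((2:ℤ) • U) ((2:ℤ) • U))) = GN16.submatrix eK eK := by decide
set_option maxRecDepth 100000 in
lemma hM : T0 = GM16.submatrix eT eT := by decide



/-- `(D4)³ ⊕ U²` and `D4 ⊕ E8 ⊕ U(2) ⊕ U(2)` are isometric. -/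
theorem T0_isometric_D4_E8_U2_U2 :
    LatticeIsometric T0 (dsum D4 (dsum E8 (dsum ((2 : ℤ) • U) ((2 : ℤ) • U)))) := by
  classical
  set P : Matrix (Fin 4 ⊕ (Fin 8 ⊕ (Fin 2 ⊕ Fin 2))) T0Ix ℤ := Pmat.submatrix eK eT with hP
  set Q : Matrix T0Ix (Fin 4 ⊕ (Fin 8 ⊕ (Fin 2 ⊕ Fin 2))) ℤ := Qmat.submatrix eT eK with hQ
  have hPQ' : P * Q = 1 := by
    rw [hP, hQ, Matrix.submatrix_mul_equiv, hPQ, Matrix.submatrix_one_equiv]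
  have hQP' : Q * P = 1 := by
    rw [hP, hQ, Matrix.submatrix_mul_equiv, hQP, Matrix.submatrix_one_equiv]
  refine ⟨LinearEquiv.ofLinear P.mulVecLin Q.mulVecLin ?_ ?_, ?_⟩
  · rw [← Matrix.mulVecLin_mul, hPQ', Matrix.mulVecLin_one]
  · rw [← Matrix.mulVecLin_mul, hQP', Matrix.mulVecLin_one]
  · intro v w
    change P.mulVec v ⬝ᵥ (dsum D4 (dsum E8 (dsum ((2 : ℤ) • U) ((2 : ℤ) • U)))).mulVec
      (P.mulVec w) = v ⬝ᵥ T0.mulVec w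
    have hg : Pᵀ * (dsum D4 (dsum E8 (dsum ((2 : ℤ) • U) ((2 : ℤ) • U)))) * P
        = T0 := by
      rw [hN, hM, hP, Matrix.transpose_submatrix, Matrix.submatrix_mul_equiv,
        Matrix.submatrix_mul_equiv, hGram]
    rw [← hg]
    rw [Matrix.mulVec_mulVec]
    rw [show P.mulVec v = Matrix.vecMul v Pᵀ from (Matrix.vecMul_transpose _ _).symm]
    rw [Matrix.dotProduct_mulVec, Matrix.vecMul_vecMul, ← Matrix.dotProduct_mulVec,
      Matrix.mul_assoc]

end MaxAlg
end
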